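/- Let c = c_◁ s_aff c_▷ be a Coxeter element in the Weyl group of an affine root system, and let λ be a complex number with λ ≠ 1. A vector v ∈ V_fin is a λ-eigenvector of c_◁ t_θ c_▷ if and only if v + (K(θ^∨, c_▷ v)/(λ−1))·δ is a λ-eigenvector of c. -/

import Mathlib

open scoped BigOperators

noncomputable section

/-- A symmetrizable generalized Cartan matrix of affine type, together with the
coefficient vector `dz` of the primitive positive imaginary root `δ` spanning the
(one dimensional) kernel of the associated symmetric bilinear form. -/
structure AffineGCM (n : ℕ) where
  /-- the generalized Cartan matrix -/
  a : Matrix (Fin n) (Fin n) ℤ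
  /-- symmetrizing factors -/
  d : Fin n → ℝ
  diag : ∀ i, a i i = 2
  offdiag : ∀ i j, i ≠ j → a i j ≤ 0
  d_pos : ∀ i, 0 < d i
  symmetrizable : ∀ i j, d i * (a i j : ℝ) = d j * (a j i : ℝ)
  /-- `K` is positive semidefinite (on the real span of the simple roots) -/
  posSemidef : ∀ g : Fin n → ℝ, 0 ≤ ∑ i, ∑ j, g i * g j * (d i * (a i j : ℝ))
  /-- `K` is not positive definite -/
  not_posDef : ∃ g : Fin n → ℝ, g ≠ 0 ∧ ∑ i, ∑ j, g i * g j * (d i * (a i j : ℝ)) = 0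
  /-- the restriction of `K` to the span of every proper subset of the simple roots
  is positive definite -/
  proper_posDef : ∀ J : Finset (Fin n), J ≠ Finset.univ →
    ∀ g : Fin n → ℝ, (∀ i, i ∉ J → g i = 0) → g ≠ 0 →
      0 < ∑ i, ∑ j, g i * g j * (d i * (a i j : ℝ))
  /-- coordinates of the positive imaginary root `δ` in the basis of simple roots -/
  dz : Fin n → ℤ
  dz_pos : ∀ i, 0 < dz i
  /-- `δ` is the imaginary root closest to the origin: its coordinates are coprime -/
  dz_prim : Finset.univ.gcd dz = 1
  /-- `δ` spans the kernel of `K` -/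
  dz_ker : ∀ j, ∑ i, (dz i : ℝ) * (d i * (a i j : ℝ)) = 0

namespace AffineGCM

variable {n : ℕ}

/-- The ambient vector space `V`, with the simple roots as standard basis. -/
abbrev V (n : ℕ) := Fin n → ℂ

/-- the simple root `α i` (the `i`-th standard basis vector) -/
def α (i : Fin n) : V n := Pi.single i 1

/-- a vector is *positive* if it lies in the nonnegative real span of the simple roots -/
def IsPosRoot (v : V n) : Prop := ∀ i, 0 ≤ (v i).re ∧ (v i).im = 0

/-- a vector is *negative* if it lies in the nonpositive real span of the simple roots -/
def IsNegRoot (v : V n) : Prop := ∀ i, (v i).re ≤ 0 ∧ (v i).im = 0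

/-- the `g`-orbit of `x`: all `g ^ k • x` for integers `k` -/
def orbit (g : V n ≃ₗ[ℂ] V n) (x : V n) : Set (V n) := Set.range fun k : ℤ => (g ^ k) x

/-- `U g`: the span of all eigenvectors of `g`, i.e. the direct sum of its eigenspaces -/
def eigSpan (g : V n ≃ₗ[ℂ] V n) : Submodule ℂ (V n) :=
  ⨆ μ : ℂ, Module.End.eigenspace (g : Module.End ℂ (V n)) μ

/-- the span `V_fin` of the simple roots other than `α aff` -/
def Vfin (aff : Fin n) : Submodule ℂ (V n) :=
  Submodule.span ℂ (α '' {i : Fin n | i ≠ aff})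

variable (C : AffineGCM n)

/-- the simple coroot `α i ^ ∨ = (d i)⁻¹ • α i` -/
def coroot (i : Fin n) : V n := ((C.d i : ℂ))⁻¹ • α i

/-- The symmetric bilinear form `K`, determined by `K (coroot i) (α j) = a i j`,
that is, `K (α i) (α j) = d i * a i j`. -/
def K : V n →ₗ[ℂ] V n →ₗ[ℂ] ℂ :=
  LinearMap.mk₂ ℂ
    (fun x y => ∑ i, ∑ j, x i * y j * ((C.d i : ℂ) * (C.a i j : ℂ)))
    (fun x x' y => by
      simp only [Pi.add_apply, add_mul, Finset.sum_add_distrib])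
    (fun r x y => by
      simp only [Pi.smul_apply, smul_eq_mul, Finset.mul_sum]
      exact Finset.sum_congr rfl fun i _ => Finset.sum_congr rfl fun j _ => by ring)
    (fun x y y' => by
      simp only [Pi.add_apply, mul_add, add_mul, Finset.sum_add_distrib])
    (fun r x y => by
      simp only [Pi.smul_apply, smul_eq_mul, Finset.mul_sum]
      exact Finset.sum_congr rfl fun i _ => Finset.sum_congr rfl fun j _ => by ring)

/-- the linear map `v ↦ v - K x v • y`; reflections are special cases -/
def reflMap (x y : V n) : V n →ₗ[ℂ] V n where
  toFun v := v - C.K x v • y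
  map_add' u v := by simp only [map_add, add_smul]; abel
  map_smul' r u := by simp only [map_smul, smul_eq_mul, RingHom.id_apply, smul_sub, smul_smul]

lemma reflMap_apply (x y v : V n) : C.reflMap x y v = v - C.K x v • y := rfl

/-- the simple reflection `s i` as a linear endomorphism -/
def sLin (i : Fin n) : V n →ₗ[ℂ] V n := C.reflMap (C.coroot i) (α i)

lemma K_α_α (i j : Fin n) : C.K (α i) (α j) = (C.d i : ℂ) * (C.a i j : ℂ) := by
  simp [K, α, LinearMap.mk₂_apply, Pi.single_apply, ite_mul, zero_mul,
    Finset.sum_ite_eq', Finset.mem_univ]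

lemma K_coroot_α (i j : Fin n) : C.K (C.coroot i) (α j) = (C.a i j : ℂ) := by
  have hd : (C.d i : ℂ) ≠ 0 := by exact_mod_cast ne_of_gt (C.d_pos i)
  simp only [coroot, map_smul, LinearMap.smul_apply, smul_eq_mul, K_α_α]
  field_simp

lemma sLin_invol (i : Fin n) (v : V n) : C.sLin i (C.sLin i v) = v := by
  have h2 : C.K (C.coroot i) (α i) = 2 := by
    rw [K_coroot_α, C.diag]; norm_num
  simp only [sLin, reflMap_apply, map_sub, map_smul, h2, smul_eq_mul]
  module

/-- the simple reflection `s i` -/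
def s (i : Fin n) : V n ≃ₗ[ℂ] V n :=
  LinearEquiv.ofLinear (C.sLin i) (C.sLin i)
    (LinearMap.ext fun v => C.sLin_invol i v) (LinearMap.ext fun v => C.sLin_invol i v)

/-- the Weyl group `W`, as a subgroup of the group of linear automorphisms of `V` -/
def Wgroup : Subgroup (V n ≃ₗ[ℂ] V n) := Subgroup.closure (Set.range C.s)

/-- the Coxeter element `c = s 1 * s 2 * ⋯ * s n` -/
def cox : V n ≃ₗ[ℂ] V n := (List.ofFn C.s).prod

/-- the positive imaginary root `δ` -/
def δv : V n := fun i => ((C.dz i : ℤ) : ℂ)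

/-- the set of real roots: `W`-images of the simple roots -/
def realRoots : Set (V n) := {v | ∃ w ∈ C.Wgroup, ∃ i, w (α i) = v}

/-- the root system `Φ`: real roots together with the imaginary roots `k • δ`, `k ≠ 0` -/
def Φ : Set (V n) := C.realRoots ∪ {v | ∃ k : ℤ, k ≠ 0 ∧ v = (k : ℂ) • C.δv}

/-- `T→ = {α 1, s 1 α 2, …, s 1 ⋯ s (n-1) α n}` -/
def Tproj : Set (V n) :=
  Set.range fun k : Fin n => ((List.ofFn C.s).take k.val).prod (α k)

/-- `T← = {α n, s n α (n-1), …, s n ⋯ s 2 α 1}` -/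
def Tinj : Set (V n) :=
  Set.range fun k : Fin n => ((List.ofFn C.s).reverse.take (n - 1 - k.val)).prod (α k)

/-- `Φ_fin`, the finite root system `Φ ∩ V_fin` -/
def Φfin (aff : Fin n) : Set (V n) := C.Φ ∩ (Vfin aff : Set (V n))

/-- the root `θ = δ - [δ : α aff] • α aff` of `Φ_fin` -/
def θv (aff : Fin n) : V n := C.δv - ((C.dz aff : ℤ) : ℂ) • α aff

/-- the reflection `t β : v ↦ v - K (β^∨) v • β` in a (real) root `β`,
where `β^∨ = (2 / K β β) • β` -/
def tRefl (β : V n) : V n →ₗ[ℂ] V n := C.reflMap ((2 / C.K β β) • β) β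

/-- `c_◁ = s 1 * ⋯ * s (aff - 1)` -/
def cleft (aff : Fin n) : V n →ₗ[ℂ] V n := ((List.ofFn C.sLin).take aff.val).prod

/-- `c_▷ = s (aff + 1) * ⋯ * s n` -/
def cright (aff : Fin n) : V n →ₗ[ℂ] V n := ((List.ofFn C.sLin).drop (aff.val + 1)).prod

/-- `Υ^fin = Φ_fin ∩ U c` -/
def Υfin (aff : Fin n) : Set (V n) := C.Φfin aff ∩ (eigSpan C.cox : Set (V n))

/-- `B` is a simple system for a set `Θ` of roots: a linearly independent subset of `Θ`
such that every element of `Θ` is a nonnegative or a nonpositive combination of `B`. -/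
def IsSimpleSystem (Θ : Set (V n)) (B : Finset (V n)) : Prop :=
  ↑B ⊆ Θ ∧ LinearIndependent ℂ (fun b : B => (b : V n)) ∧
    ∀ v ∈ Θ, ∃ g : V n → ℝ, ((∀ b ∈ B, 0 ≤ g b) ∨ (∀ b ∈ B, g b ≤ 0)) ∧
      v = ∑ b ∈ B, (g b : ℂ) • b

/-- two roots of `Θ` are connected if they are joined by a chain of roots of `Θ`
that are pairwise non-orthogonal (with respect to `K`) -/
def Connected (Θ : Set (V n)) (x y : V n) : Prop :=
  Relation.ReflTransGen (fun u v => u ∈ Θ ∧ v ∈ Θ ∧ C.K u v ≠ 0) x y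

/-- the irreducible component of `x` in `Θ` -/
def component (Θ : Set (V n)) (x : V n) : Set (V n) := {y | y ∈ Θ ∧ C.Connected Θ x y}

/-- a set of roots is of finite type `A` if it consists exactly of the vectors
`±(β i + β (i+1) + ⋯ + β j)` for a linearly independent family `β 1, …, β k` -/
def IsTypeA (Θ : Set (V n)) : Prop :=
  ∃ (k : ℕ) (β : Fin k → V n), LinearIndependent ℂ β ∧ (∀ i, β i ∈ Θ) ∧
    Θ = {v | ∃ i j : Fin k, i ≤ j ∧
      (v = ∑ l ∈ Finset.Icc i j, β l ∨ v = -∑ l ∈ Finset.Icc i j, β l)}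

/-- `Ω = {β 1, t (β 1) (β 2), …, t (β 1) ⋯ t (β (m-1)) (β m)}` for an ordered
tuple `β` of roots -/
def Ωset {m : ℕ} (β : Fin m → V n) : Set (V n) :=
  Set.range fun j : Fin m => (((List.ofFn fun i => C.tRefl (β i)).take j.val).prod) (β j)

/-- `s i` is initial in a Coxeter element `c` if `c` is the product of a permutation
of all the simple reflections starting with `s i` -/
def IsInitial (i : Fin n) (c : V n ≃ₗ[ℂ] V n) : Prop :=
  ∃ l : List (Fin n), (i :: l).Perm (List.finRange n) ∧ ((i :: l).map C.s).prod = c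

/-- `s i` is final in a Coxeter element `c` if `c` is the product of a permutation
of all the simple reflections ending with `s i` -/
def IsFinal (i : Fin n) (c : V n ≃ₗ[ℂ] V n) : Prop :=
  ∃ l : List (Fin n), (l ++ [i]).Perm (List.finRange n) ∧ ((l ++ [i]).map C.s).prod = c

/-- the skew-symmetric bilinear form `ω_c`, determined by
`ω_c (coroot i) (α j) = a i j` if `i > j`, `= 0` if `i = j`, `= -a i j` if `i < j` -/
def ω : V n →ₗ[ℂ] V n →ₗ[ℂ] ℂ :=
  LinearMap.mk₂ ℂ
    (fun x y => ∑ i, ∑ j, x i * y j *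
      ((if j < i then 1 else if i = j then 0 else -1) * ((C.d i : ℂ) * (C.a i j : ℂ))))
    (fun x x' y => by
      simp only [Pi.add_apply, add_mul, Finset.sum_add_distrib])
    (fun r x y => by
      simp only [Pi.smul_apply, smul_eq_mul, Finset.mul_sum]
      exact Finset.sum_congr rfl fun i _ => Finset.sum_congr rfl fun j _ => by ring)
    (fun x y y' => by
      simp only [Pi.add_apply, mul_add, add_mul, Finset.sum_add_distrib])
    (fun r x y => by
      simp only [Pi.smul_apply, smul_eq_mul, Finset.mul_sum]
      exact Finset.sum_congr rfl fun i _ => Finset.sum_congr rfl fun j _ => by ring)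


section Aux
variable {n : ℕ} (C : AffineGCM n)

lemma K_apply' (x y : V n) :
    C.K x y = ∑ i, ∑ j, x i * y j * ((C.d i : ℂ) * (C.a i j : ℂ)) := rfl

lemma K_symm' (x y : V n) : C.K x y = C.K y x := by
  rw [K_apply', K_apply', Finset.sum_comm]
  refine Finset.sum_congr rfl fun j _ => Finset.sum_congr rfl fun i _ => ?_
  have h : (C.d i : ℝ) * (C.a i j : ℝ) = (C.d j : ℝ) * (C.a j i : ℝ) := C.symmetrizable i j
  have h' : (C.d i : ℂ) * (C.a i j : ℂ) = (C.d j : ℂ) * (C.a j i : ℂ) := by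
    exact_mod_cast congrArg Complex.ofReal h
  rw [h']; ring

lemma K_δ_left (x : V n) : C.K C.δv x = 0 := by
  rw [K_apply', Finset.sum_comm]
  refine Finset.sum_eq_zero fun j _ => ?_
  have h := C.dz_ker j
  have h' : ∑ i, ((C.dz i : ℂ)) * ((C.d i : ℂ) * (C.a i j : ℂ)) = 0 := by
    exact_mod_cast congrArg Complex.ofReal h
  calc ∑ i, C.δv i * x j * ((C.d i : ℂ) * (C.a i j : ℂ))
      = x j * ∑ i, ((C.dz i : ℂ)) * ((C.d i : ℂ) * (C.a i j : ℂ)) := by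
        rw [Finset.mul_sum]
        refine Finset.sum_congr rfl fun i _ => ?_
        simp only [δv]; ring
    _ = 0 := by rw [h', mul_zero]

lemma K_δ_right (x : V n) : C.K x C.δv = 0 := by rw [K_symm', K_δ_left]

lemma sLin_δ (i : Fin n) : C.sLin i C.δv = C.δv := by
  simp [sLin, reflMap_apply, K_δ_right]

lemma listprod_δ (l : List (V n →ₗ[ℂ] V n)) (h : ∀ f ∈ l, f C.δv = C.δv) :
    l.prod C.δv = C.δv := by
  induction l with
  | nil => simp
  | cons f l ih =>
      rw [List.prod_cons, Module.End.mul_apply, ih (fun g hg => h g (List.mem_cons_of_mem f hg)),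
        h f List.mem_cons_self]

lemma cleft_δ (aff : Fin n) : C.cleft aff C.δv = C.δv := by
  refine C.listprod_δ _ fun f hf => ?_
  obtain ⟨i, rfl⟩ := List.mem_ofFn.mp (List.mem_of_mem_take hf)
  exact C.sLin_δ i

lemma equivprod_apply (l : List (V n ≃ₗ[ℂ] V n)) (x : V n) :
    l.prod x = (l.map LinearEquiv.toLinearMap).prod x := by
  induction l with
  | nil => simp
  | cons f l ih =>
      rw [List.prod_cons, List.map_cons, List.prod_cons, Module.End.mul_apply, ← ih]
      rfl

lemma cox_eq (aff : Fin n) (x : V n) :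
    C.cox x = C.cleft aff (C.sLin aff (C.cright aff x)) := by
  have hlen : (aff : ℕ) < (List.ofFn C.sLin).length := by simp [aff.isLt]
  have hsplit : List.ofFn C.sLin =
      (List.ofFn C.sLin).take aff ++ C.sLin aff :: (List.ofFn C.sLin).drop (aff + 1) := by
    conv_lhs => rw [← List.take_append_drop (aff : ℕ) (List.ofFn C.sLin)]
    rw [List.drop_eq_getElem_cons hlen, List.getElem_ofFn]
  have hmap : (List.ofFn C.s).map LinearEquiv.toLinearMap = List.ofFn C.sLin := by
    rw [List.map_ofFn]; rfl
  rw [cox, equivprod_apply, hmap, hsplit, List.prod_append, List.prod_cons]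
  rfl

lemma cox_δ : C.cox C.δv = C.δv := by
  rw [cox, equivprod_apply]
  refine C.listprod_δ _ fun f hf => ?_
  obtain ⟨e, he, rfl⟩ := List.mem_map.mp hf
  obtain ⟨i, rfl⟩ := List.mem_ofFn.mp he
  exact C.sLin_δ i

lemma K_θ_left (aff : Fin n) (y : V n) :
    C.K (C.θv aff) y = -(C.dz aff : ℂ) * C.K (α aff) y := by
  rw [θv, map_sub, map_smul, LinearMap.sub_apply, LinearMap.smul_apply, K_δ_left,
    smul_eq_mul]
  ring

lemma K_θ_θ (aff : Fin n) :
    C.K (C.θv aff) (C.θv aff) = 2 * (C.dz aff : ℂ) ^ 2 * (C.d aff : ℂ) := by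
  rw [K_θ_left, θv, map_sub, map_smul, K_δ_right, K_α_α, smul_eq_mul]
  have : (C.a aff aff : ℂ) = 2 := by exact_mod_cast congrArg Int.cast (C.diag aff)
  rw [this]
  ring

lemma K_coroot' (aff : Fin n) (y : V n) :
    C.K (C.coroot aff) y = (C.d aff : ℂ)⁻¹ * C.K (α aff) y := by
  rw [coroot, map_smul, LinearMap.smul_apply, smul_eq_mul]

lemma Kθvee (aff : Fin n) (y : V n) :
    C.K ((2 / C.K (C.θv aff) (C.θv aff)) • C.θv aff) y
      = -((C.dz aff : ℂ)⁻¹) * C.K (C.coroot aff) y := by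
  have hm : (C.dz aff : ℂ) ≠ 0 := by
    exact_mod_cast Int.cast_ne_zero.mpr (C.dz_pos aff).ne'
  have hd : (C.d aff : ℂ) ≠ 0 := by exact_mod_cast (C.d_pos aff).ne'
  rw [map_smul, LinearMap.smul_apply, smul_eq_mul, K_θ_θ, K_θ_left, K_coroot']
  field_simp

lemma tRefl_θ (aff : Fin n) (y : V n) :
    C.tRefl (C.θv aff) y
      = C.sLin aff y + (((C.dz aff : ℂ))⁻¹ * C.K (C.coroot aff) y) • C.δv := by
  have hm : (C.dz aff : ℂ) ≠ 0 := by
    exact_mod_cast Int.cast_ne_zero.mpr (C.dz_pos aff).ne'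
  have hd : (C.d aff : ℂ) ≠ 0 := by exact_mod_cast (C.d_pos aff).ne'
  rw [tRefl, reflMap_apply, sLin, reflMap_apply, Kθvee, K_coroot', θv]
  match_scalars
  · ring
  · field_simp
  · field_simp

lemma key_identity (aff : Fin n) (x : V n) :
    (C.cleft aff * C.tRefl (C.θv aff) * C.cright aff) x
      = C.cox x + (((C.dz aff : ℂ))⁻¹ * C.K (C.coroot aff) (C.cright aff x)) • C.δv := by
  rw [Module.End.mul_apply, Module.End.mul_apply, tRefl_θ, map_add, map_smul, cleft_δ,
    cox_eq C aff x]

lemma Vfin_apply_aff {aff : Fin n} {v : V n} (hv : v ∈ Vfin aff) : v aff = 0 := by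
  have hle : Vfin aff ≤ LinearMap.ker (LinearMap.proj aff : V n →ₗ[ℂ] ℂ) := by
    rw [Vfin, Submodule.span_le]
    rintro _ ⟨i, hi, rfl⟩
    simp only [SetLike.mem_coe, LinearMap.mem_ker, LinearMap.proj_apply, α]
    exact Pi.single_eq_of_ne (Ne.symm hi) 1
  exact hle hv

end Aux

/-- Proposition 3.1(5): for `λ ≠ 1`, a vector `v ∈ V_fin` is a `λ`-eigenvector of
`c_◁ t_θ c_▷` iff `v + (K (θ^∨) (c_▷ v) / (λ - 1)) • δ` is a `λ`-eigenvector of `c`. -/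
theorem eigenvector_correspondence {n : ℕ} (C : AffineGCM n) (aff : Fin n)
    (haff : ((Subgroup.closure (C.s '' {j : Fin n | j ≠ aff}) : Subgroup (V n ≃ₗ[ℂ] V n)) : Set (V n ≃ₗ[ℂ] V n)).Finite)
    (lam : ℂ) (hlam : lam ≠ 1) (v : V n) (hv : v ∈ Vfin aff) (w : V n)
    (hw : w = v + (C.K ((2 / C.K (C.θv aff) (C.θv aff)) • C.θv aff) (C.cright aff v) / (lam - 1)) • C.δv) :
    (v ≠ 0 ∧ (C.cleft aff * C.tRefl (C.θv aff) * C.cright aff) v = lam • v) ↔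
      (w ≠ 0 ∧ C.cox w = lam • w) := by
  have hm : (C.dz aff : ℂ) ≠ 0 := by
    exact_mod_cast Int.cast_ne_zero.mpr (C.dz_pos aff).ne'
  have hl1 : lam - 1 ≠ 0 := sub_ne_zero.mpr hlam
  set Kc : ℂ := C.K (C.coroot aff) (C.cright aff v) with hKc
  set m : ℂ := (C.dz aff : ℂ) with hmdef
  set t : ℂ := -(m⁻¹) * Kc / (lam - 1) with htdef
  have hw' : w = v + t • C.δv := by rw [hw, Kθvee]
  have ht : t * (lam - 1) = -(m⁻¹) * Kc := div_mul_cancel₀ _ hl1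
  have hL : (C.cleft aff * C.tRefl (C.θv aff) * C.cright aff) v
      = C.cox v + (m⁻¹ * Kc) • C.δv := C.key_identity aff v
  have hcoxw : C.cox w = C.cox v + t • C.δv := by
    rw [hw', map_add, map_smul, cox_δ]
  have hvaff : v aff = 0 := Vfin_apply_aff hv
  have hδaff : C.δv aff = m := rfl
  constructor
  · rintro ⟨h1, h2⟩
    rw [hL] at h2
    have hA : C.cox v = lam • v - (m⁻¹ * Kc) • C.δv := eq_sub_of_add_eq h2
    have hs : -(m⁻¹ * Kc) + t = lam * t := by linear_combination -ht
    constructor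
    · intro h0
      rw [hw'] at h0
      have h0a := congrFun h0 aff
      simp only [Pi.add_apply, Pi.smul_apply, smul_eq_mul, hvaff, hδaff, zero_add,
        Pi.zero_apply] at h0a
      have ht0 : t = 0 := by
        rcases mul_eq_zero.mp h0a with h | h
        · exact h
        · exact absurd h hm
      rw [ht0, zero_smul, add_zero] at h0
      exact h1 h0
    · rw [hcoxw, hw', hA]
      calc lam • v - (m⁻¹ * Kc) • C.δv + t • C.δv
          = lam • v + (-(m⁻¹ * Kc) + t) • C.δv := by module
        _ = lam • v + (lam * t) • C.δv := by rw [hs]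
        _ = lam • (v + t • C.δv) := by module
  · rintro ⟨h1, h2⟩
    rw [hcoxw, hw'] at h2
    have hA : C.cox v = lam • (v + t • C.δv) - t • C.δv := eq_sub_of_add_eq h2
    have hs : lam * t - t + m⁻¹ * Kc = 0 := by linear_combination ht
    constructor
    · intro h0
      have hKc0 : Kc = 0 := by rw [hKc, h0, map_zero, map_zero]
      have ht0 : t = 0 := by rw [htdef, hKc0, mul_zero, zero_div]
      rw [hw', h0, ht0, zero_smul, add_zero] at h1
      exact h1 rfl
    · rw [hL, hA]
      calc lam • (v + t • C.δv) - t • C.δv + (m⁻¹ * Kc) • C.δv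
          = lam • v + (lam * t - t + m⁻¹ * Kc) • C.δv := by module
        _ = lam • v := by rw [hs, zero_smul, add_zero]


end AffineGCM
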